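/- A function f : (k+1)^V → ℝ is k-submodular (i.e., f(x) + f(y) ≥ f(x ⊔ y) + f(x ⊓ y) for all x, y) if and only if f is both orthant submodular and pairwise monotone. -/
import Mathlib


namespace Stmt0

variable {V : Type*}

/-- Marginal gain `Δ_{e,i} f(x) = f(x[e↦i]) − f(x)`. -/
def marg {k : ℕ} [DecidableEq V] (f : (V → Fin (k+1)) → ℝ)
    (x : V → Fin (k+1)) (e : V) (i : Fin (k+1)) : ℝ :=
  f (Function.update x e i) - f x

/-- `x ⪯ y` : `y` agrees with `x` on the support of `x`. -/
def preceq {k : ℕ} (x y : V → Fin (k+1)) : Prop :=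
  ∀ e, x e ≠ 0 → y e = x e

def OrthantSubmodular {k : ℕ} [DecidableEq V] (f : (V → Fin (k+1)) → ℝ) : Prop :=
  ∀ x y : V → Fin (k+1), preceq x y → ∀ e, y e = 0 → ∀ i : Fin (k+1), i ≠ 0 →
    marg f x e i ≥ marg f y e i

def PairwiseMonotone {k : ℕ} [DecidableEq V] (f : (V → Fin (k+1)) → ℝ) : Prop :=
  ∀ x : V → Fin (k+1), ∀ e, x e = 0 → ∀ i j : Fin (k+1), i ≠ 0 → j ≠ 0 → i ≠ j →
    marg f x e i + marg f x e j ≥ 0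

/-- `(x ⊓ y)(e) = x(e)` if `x(e) = y(e)` and `0` otherwise. -/
def kinf {k : ℕ} (x y : V → Fin (k+1)) : V → Fin (k+1) :=
  fun e => if x e = y e then x e else 0

/-- `(x ⊔ y)(e) = x(e)` if `y(e) ∈ {0, x(e)}`; `= y(e)` if `x(e) = 0 ≠ y(e)`;
`= 0` if `x(e), y(e)` are distinct and both nonzero. -/
def ksup {k : ℕ} (x y : V → Fin (k+1)) : V → Fin (k+1) :=
  fun e => if y e = 0 ∨ y e = x e then x e else if x e = 0 then y e else 0

def KSubmodular {k : ℕ} (f : (V → Fin (k+1)) → ℝ) : Prop :=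
  ∀ x y : V → Fin (k+1), f x + f y ≥ f (ksup x y) + f (kinf x y)

section Aux
variable {k : ℕ} [DecidableEq V]

lemma ksup_comm (x y : V → Fin (k+1)) : ksup x y = ksup y x := by
  funext e
  unfold ksup
  by_cases h1 : x e = 0 <;> by_cases h2 : y e = 0 <;> by_cases h3 : x e = y e <;>
    simp_all <;> tauto

lemma kinf_comm (x y : V → Fin (k+1)) : kinf x y = kinf y x := by
  funext e
  unfold kinf
  by_cases h : x e = y e
  · simp [h]
  · rw [if_neg h, if_neg (fun h' : y e = x e => h h'.symm)]

lemma ksup_self (x : V → Fin (k+1)) : ksup x x = x := by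
  funext e; simp [ksup]

lemma kinf_self (x : V → Fin (k+1)) : kinf x x = x := by
  funext e; simp [kinf]

lemma kinf_preceq_left (x y : V → Fin (k+1)) : preceq (kinf x y) x := by
  intro e he
  unfold kinf at he ⊢
  by_cases h : x e = y e <;> simp_all

-- forward direction computations
lemma ksup_update_preceq (x y : V → Fin (k+1)) (hxy : preceq x y) (e : V)
    (hye : y e = 0) (i : Fin (k+1)) (hi : i ≠ 0) :
    ksup (Function.update x e i) y = Function.update y e i := by
  funext e'
  by_cases h : e' = e
  · subst h
    simp [ksup, hye, Function.update_self]
  · simp only [ksup, Function.update_of_ne h]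
    by_cases h1 : y e' = 0
    · have hx0 : x e' = 0 := by
        by_contra hx
        exact hx ((hxy e' hx).symm.trans h1)
      simp [h1, hx0]
    · by_cases h2 : y e' = x e'
      · simp [h2]
      · have hx0 : x e' = 0 := by
          by_contra hx
          exact h2 (hxy e' hx)
        simp [h1, h2, hx0]

lemma kinf_update_preceq (x y : V → Fin (k+1)) (hxy : preceq x y) (e : V)
    (hye : y e = 0) (hxe : x e = 0) (i : Fin (k+1)) (hi : i ≠ 0) :
    kinf (Function.update x e i) y = x := by
  funext e'
  by_cases h : e' = e
  · subst h
    simp only [kinf, Function.update_self, hye, hxe]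
    simp [hi]
  · simp only [kinf, Function.update_of_ne h]
    by_cases h1 : x e' = y e'
    · simp [h1]
    · have hx0 : x e' = 0 := by
        by_contra hx
        exact h1 (hxy e' hx).symm
      simp [h1, hx0]

lemma ksup_update_update (x : V → Fin (k+1)) (e : V) (hxe : x e = 0)
    (i j : Fin (k+1)) (hi : i ≠ 0) (hj : j ≠ 0) (hij : i ≠ j) :
    ksup (Function.update x e i) (Function.update x e j) = x := by
  funext e'
  by_cases h : e' = e
  · subst h
    have : ¬ (j = 0 ∨ j = i) := by
      push_neg; exact ⟨hj, fun h' => hij h'.symm⟩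
    simp [ksup, Function.update_self, this, hi, hxe]
  · simp [ksup, Function.update_of_ne h]

lemma kinf_update_update (x : V → Fin (k+1)) (e : V) (hxe : x e = 0)
    (i j : Fin (k+1)) (hij : i ≠ j) :
    kinf (Function.update x e i) (Function.update x e j) = x := by
  funext e'
  by_cases h : e' = e
  · subst h
    simp [kinf, Function.update_self, hij, hxe]
  · simp [kinf, Function.update_of_ne h]

variable (f : (V → Fin (k+1)) → ℝ)

lemma ksub_orthant (h : KSubmodular f) : OrthantSubmodular f := by
  intro x y hxy e hye i hi
  have hxe : x e = 0 := by
    by_contra hx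
    exact hx ((hxy e hx).symm.trans hye)
  have key := h (Function.update x e i) y
  rw [ksup_update_preceq x y hxy e hye i hi,
    kinf_update_preceq x y hxy e hye hxe i hi] at key
  unfold marg
  linarith

lemma ksub_pairwise (h : KSubmodular f) : PairwiseMonotone f := by
  intro x e hxe i j hi hj hij
  have key := h (Function.update x e i) (Function.update x e j)
  rw [ksup_update_update x e hxe i j hi hj hij,
    kinf_update_update x e hxe i j hij] at key
  unfold marg
  linarith

/-- Case A step: `x e = 0`, `y e ≠ 0`. -/
lemma stepA (hOS : OrthantSubmodular f) (x y : V → Fin (k+1)) (e : V)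
    (hx : x e = 0) (hy : y e ≠ 0)
    (ih : f (Function.update x e (y e)) + f y ≥
      f (ksup (Function.update x e (y e)) y) + f (kinf (Function.update x e (y e)) y)) :
    f x + f y ≥ f (ksup x y) + f (kinf x y) := by
  have h1 : ksup (Function.update x e (y e)) y = ksup x y := by
    funext e'
    by_cases h : e' = e
    · subst h
      simp [ksup, Function.update_self, hy, hx]
    · simp [ksup, Function.update_of_ne h]
  have h2 : kinf (Function.update x e (y e)) y = Function.update (kinf x y) e (y e) := by
    funext e'
    by_cases h : e' = e
    · subst h
      simp [kinf, Function.update_self]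
    · simp [kinf, Function.update_of_ne h]
  have hOS' := hOS (kinf x y) x (kinf_preceq_left x y) e hx (y e) hy
  unfold marg at hOS'
  rw [h1, h2] at ih
  linarith

lemma diff_update_right [Fintype V] (x y : V → Fin (k+1)) (e : V) :
    (Finset.univ.filter fun e' => x e' ≠ Function.update y e (x e) e') =
      (Finset.univ.filter fun e' => x e' ≠ y e').erase e := by
  ext e'
  by_cases h : e' = e
  · subst h; simp
  · simp [Finset.mem_erase, h, Function.update_of_ne h]

lemma key [Fintype V] (hOS : OrthantSubmodular f) (hPM : PairwiseMonotone f) :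
    ∀ n : ℕ, ∀ x y : V → Fin (k+1),
      (Finset.univ.filter fun e => x e ≠ y e).card ≤ n →
      f x + f y ≥ f (ksup x y) + f (kinf x y) := by
  intro n
  induction n with
  | zero =>
    intro x y hcard
    have hxy : x = y := by
      funext e
      by_contra h
      have : e ∈ Finset.univ.filter fun e => x e ≠ y e := by simp [h]
      have := Finset.card_pos.mpr ⟨e, this⟩
      omega
    subst hxy
    rw [ksup_self, kinf_self]
  | succ n ih =>
    intro x y hcard
    by_cases hA : ∃ e, x e = 0 ∧ y e ≠ 0
    · obtain ⟨e, hx, hy⟩ := hA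
      refine stepA f hOS x y e hx hy ?_
      apply ih
      have heq : (Finset.univ.filter fun e' => Function.update x e (y e) e' ≠ y e') =
          (Finset.univ.filter fun e' => x e' ≠ y e').erase e := by
        ext e'
        by_cases h : e' = e
        · subst h; simp
        · simp [Finset.mem_erase, h, Function.update_of_ne h]
      rw [heq]
      have hmem : e ∈ Finset.univ.filter fun e' => x e' ≠ y e' := by
        simp only [Finset.mem_filter, Finset.mem_univ, true_and]
        exact fun h => hy (h ▸ hx)
      rw [Finset.card_erase_of_mem hmem]
      omega
    · by_cases hB : ∃ e, y e = 0 ∧ x e ≠ 0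
      · obtain ⟨e, hy, hx⟩ := hB
        have hstep : f y + f x ≥ f (ksup y x) + f (kinf y x) := by
          refine stepA f hOS y x e hy hx ?_
          apply ih
          have heq : (Finset.univ.filter fun e' => Function.update y e (x e) e' ≠ x e') =
              (Finset.univ.filter fun e' => y e' ≠ x e').erase e := by
            ext e'
            by_cases h : e' = e
            · subst h; simp
            · simp [Finset.mem_erase, h, Function.update_of_ne h]
          have hsymm : (Finset.univ.filter fun e' => y e' ≠ x e') =
              (Finset.univ.filter fun e' => x e' ≠ y e') := by
            ext e'; simp [ne_comm]
          have hmem : e ∈ Finset.univ.filter fun e' => y e' ≠ x e' := by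
            simp only [Finset.mem_filter, Finset.mem_univ, true_and]
            exact fun h => hx (h ▸ hy)
          rw [heq, Finset.card_erase_of_mem hmem, hsymm]
          omega
        rw [ksup_comm x y, kinf_comm x y]
        linarith
      · -- only conflict coordinates remain
        push_neg at hA hB
        by_cases hxy : x = y
        · subst hxy
          rw [ksup_self, kinf_self]
        · obtain ⟨e, hne⟩ : ∃ e, x e ≠ y e := by
            by_contra h
            push_neg at h
            exact hxy (funext h)
          have hi : x e ≠ 0 := fun h => hne (h.trans (hA e h).symm)
          have hj : y e ≠ 0 := fun h => hne ((hB e h).trans h.symm)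
          have hsz : ksup x y = kinf x y := by
            funext e'
            by_cases h : x e' = y e'
            · simp [ksup, kinf, h]
            · have hx0 : x e' ≠ 0 := fun h0 => h (h0.trans (hA e' h0).symm)
              have hy0 : y e' ≠ 0 := fun h0 => h ((hB e' h0).trans h0.symm)
              have hyx : y e' ≠ x e' := fun h0 => h h0.symm
              simp [ksup, kinf, h, hx0, hy0, hyx]
          set y0 := Function.update y e 0 with hy0def
          have hy0e : y0 e = 0 := by simp [hy0def]
          have hpre : preceq (kinf x y) y0 := by
            intro e' h
            have hxy' : x e' = y e' := by
              by_contra h'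
              simp [kinf, h'] at h
            have hee : e' ≠ e := fun h' => hne (h' ▸ hxy')
            simp [hy0def, Function.update_of_ne hee, kinf, hxy']
          have hOS' := hOS (kinf x y) y0 hpre e hy0e (x e) hi
          have hPM' := hPM y0 e hy0e (x e) (y e) hi hj hne
          have ihC : f x + f (Function.update y e (x e)) ≥
              f (ksup x (Function.update y e (x e))) +
                f (kinf x (Function.update y e (x e))) := by
            apply ih
            have hmem : e ∈ Finset.univ.filter fun e' => x e' ≠ y e' := by
              simp only [Finset.mem_filter, Finset.mem_univ, true_and]
              exact hne
            rw [diff_update_right x y e, Finset.card_erase_of_mem hmem]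
            omega
          have hsup' : ksup x (Function.update y e (x e)) =
              Function.update (ksup x y) e (x e) := by
            funext e'
            by_cases h : e' = e
            · subst h
              simp [ksup, Function.update_self]
            · simp [ksup, Function.update_of_ne h]
          have hinf' : kinf x (Function.update y e (x e)) =
              Function.update (kinf x y) e (x e) := by
            funext e'
            by_cases h : e' = e
            · subst h
              simp [kinf, Function.update_self]
            · simp [kinf, Function.update_of_ne h]
          rw [hsup', hinf', hsz] at ihC
          have e1 : Function.update y0 e (x e) = Function.update y e (x e) := by
            rw [hy0def, Function.update_idem]
          have e2 : Function.update y0 e (y e) = y := by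
            rw [hy0def, Function.update_idem, Function.update_eq_self]
          unfold marg at hOS' hPM'
          rw [e1] at hOS' hPM'
          rw [e2] at hPM'
          have hzi : kinf x y e = 0 := by simp [kinf, hne]
          rw [hsz]
          linarith

end Aux

/-- A function `f : (k+1)^V → ℝ` is `k`-submodular iff it is orthant submodular
and pairwise monotone. -/
theorem stmt0 {k : ℕ} (hk : 1 ≤ k) [Fintype V] [DecidableEq V]
    (f : (V → Fin (k+1)) → ℝ) :
    KSubmodular f ↔ OrthantSubmodular f ∧ PairwiseMonotone f := by
  constructor
  · intro h
    exact ⟨ksub_orthant f h, ksub_pairwise f h⟩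
  · rintro ⟨hOS, hPM⟩
    intro x y
    exact key f hOS hPM _ x y le_rfl

end Stmt0
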